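/- Let P be an n x n complex matrix. (i) If there exist K > 0 and an invertible matrix T with ||T|| <= K, ||T^{-1}|| <= K and T^{-1} P T a real diagonal matrix, then H := (T T*)^{-1} is Hermitian, satisfies H P = P* H, and K^{-2} I <= H <= K^{2} I. (ii) Conversely, if there exist M > 0 and a Hermitian matrix H with H P = P* H and M^{-1} I <= H <= M I, then there exists an invertible matrix T with ||T|| <= sqrt(M), ||T^{-1}|| <= sqrt(M) and T^{-1} P T a real diagonal matrix; one may take T = H^{-1/2} U where U is a unitary matrix diagonalizing the Hermitian matrix H^{1/2} P H^{-1/2}. -/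

import Mathlib

open Matrix
open scoped ComplexOrder

/-- The spectral (ℓ²-operator) norm of a complex matrix. -/
noncomputable def matOpNorm {n : Type*} [Fintype n] [DecidableEq n] (M : Matrix n n ℂ) : ℝ :=
  ‖Matrix.toEuclideanCLM (𝕜 := ℂ) M‖

/-- The Loewner order `A ≤ B` for complex matrices: `B - A` is positive semidefinite. -/
def loewnerLE {n : Type*} [Fintype n] (A B : Matrix n n ℂ) : Prop := (B - A).PosSemidef

/-- The positive semidefinite square root of a positive semidefinite matrix
(the definition `Matrix.PosSemidef.sqrt` of the older Mathlib, since removed). -/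
noncomputable def Matrix.PosSemidef.sqrt {n : Type*} [Fintype n] [DecidableEq n]
    {A : Matrix n n ℂ} (hA : A.PosSemidef) : Matrix n n ℂ :=
  hA.1.eigenvectorUnitary.1 * diagonal ((↑) ∘ (fun x : ℝ => Real.sqrt x) ∘ hA.1.eigenvalues) *
    (star hA.1.eigenvectorUnitary : Matrix n n ℂ)

lemma Matrix.PosSemidef.posSemidef_sqrt {n : ℕ} {H : Matrix (Fin n) (Fin n) ℂ}
    (hH : H.PosSemidef) : hH.sqrt.PosSemidef := by
  have hd : (diagonal ((↑) ∘ (fun x : ℝ => Real.sqrt x) ∘ hH.1.eigenvalues) :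
      Matrix (Fin n) (Fin n) ℂ).PosSemidef :=
    Matrix.PosSemidef.diagonal (fun i => Complex.zero_le_real.mpr (Real.sqrt_nonneg _))
  have := hd.mul_mul_conjTranspose_same (hH.1.eigenvectorUnitary : Matrix (Fin n) (Fin n) ℂ)
  unfold Matrix.PosSemidef.sqrt
  rwa [← Matrix.star_eq_conjTranspose] at this

lemma Matrix.PosSemidef.sqrt_mul_self {n : ℕ} {H : Matrix (Fin n) (Fin n) ℂ}
    (hH : H.PosSemidef) : hH.sqrt * hH.sqrt = H := by
  have hU : (star (hH.1.eigenvectorUnitary : Matrix (Fin n) (Fin n) ℂ)) *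
      (hH.1.eigenvectorUnitary : Matrix (Fin n) (Fin n) ℂ) = 1 := Unitary.coe_star_mul_self _
  have hD : (diagonal ((↑) ∘ (fun x : ℝ => Real.sqrt x) ∘ hH.1.eigenvalues) :
      Matrix (Fin n) (Fin n) ℂ) * diagonal ((↑) ∘ (fun x : ℝ => Real.sqrt x) ∘ hH.1.eigenvalues)
      = diagonal (RCLike.ofReal ∘ hH.1.eigenvalues) := by
    rw [diagonal_mul_diagonal]
    congr 1
    funext i
    simp only [Function.comp_apply]
    rw [← Complex.ofReal_mul, Real.mul_self_sqrt (hH.eigenvalues_nonneg i)]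
    rfl
  conv_rhs => rw [hH.1.spectral_theorem]
  simp only [Matrix.PosSemidef.sqrt, Unitary.conjStarAlgAut_apply, Matrix.mul_assoc]
  rw [← Matrix.mul_assoc (star _) _ (diagonal _ * _), hU, Matrix.one_mul,
    ← Matrix.mul_assoc (diagonal _) (diagonal _), hD]

namespace StmtAux
variable {n : ℕ}

noncomputable def sv (v : Fin n → ℂ) : EuclideanSpace ℂ (Fin n) :=
  (WithLp.equiv 2 (Fin n → ℂ)).symm v

lemma dot_self_eq (v : Fin n → ℂ) :
    dotProduct (star v) v = ((‖sv v‖ : ℝ) : ℂ) ^ 2 := by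
  rw [dotProduct_comm, ← EuclideanSpace.inner_toLp_toLp, inner_self_eq_norm_sq_to_K]; rfl

lemma dot_ctm (A : Matrix (Fin n) (Fin n) ℂ) (v : Fin n → ℂ) :
    dotProduct (star v) ((Aᴴ * A) *ᵥ v) = ((‖sv (A *ᵥ v)‖ : ℝ) : ℂ) ^ 2 := by
  rw [← mulVec_mulVec, dotProduct_mulVec, ← star_mulVec, dot_self_eq]

lemma clm_apply (A : Matrix (Fin n) (Fin n) ℂ) (v : Fin n → ℂ) :
    Matrix.toEuclideanCLM (𝕜 := ℂ) A (sv v) = sv (A *ᵥ v) := by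
  exact Matrix.toEuclideanCLM_toLp A v

lemma norm_mulVec_le {A : Matrix (Fin n) (Fin n) ℂ} {c : ℝ} (h : matOpNorm A ≤ c)
    (v : Fin n → ℂ) : ‖sv (A *ᵥ v)‖ ≤ c * ‖sv v‖ := by
  rw [← clm_apply]
  exact ((Matrix.toEuclideanCLM (𝕜 := ℂ) A).le_opNorm (sv v)).trans
    (mul_le_mul_of_nonneg_right h (norm_nonneg _))

lemma matOpNorm_le_of {A : Matrix (Fin n) (Fin n) ℂ} {c : ℝ} (hc : 0 ≤ c)
    (h : ∀ v : Fin n → ℂ, ‖sv (A *ᵥ v)‖ ≤ c * ‖sv v‖) : matOpNorm A ≤ c := by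
  refine ContinuousLinearMap.opNorm_le_bound _ hc fun x => ?_
  have := h ((WithLp.equiv 2 (Fin n → ℂ)) x)
  rw [← clm_apply] at this
  simpa [sv] using this

lemma posSemidef_smul_one_sub (A : Matrix (Fin n) (Fin n) ℂ) {c : ℝ}
    (h : ∀ v : Fin n → ℂ, ‖sv (A *ᵥ v)‖ ^ 2 ≤ c * ‖sv v‖ ^ 2) :
    (((c : ℂ) • (1 : Matrix (Fin n) (Fin n) ℂ)) - Aᴴ * A).PosSemidef := by
  refine Matrix.PosSemidef.of_dotProduct_mulVec_nonneg ?_ ?_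
  · refine Matrix.IsHermitian.sub ?_ (Matrix.isHermitian_conjTranspose_mul_self A)
    simp [Matrix.IsHermitian, Matrix.conjTranspose_smul, Complex.star_def, Complex.conj_ofReal]
  · intro v
    rw [sub_mulVec, dotProduct_sub, smul_mulVec, one_mulVec, dotProduct_smul, dot_self_eq,
      dot_ctm, smul_eq_mul]
    rw [sub_nonneg]
    calc ((‖sv (A *ᵥ v)‖ : ℝ) : ℂ) ^ 2 = ((‖sv (A *ᵥ v)‖ ^ 2 : ℝ) : ℂ) := by push_cast; ring
    _ ≤ ((c * ‖sv v‖ ^ 2 : ℝ) : ℂ) := by rw [Complex.real_le_real]; exact h v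
    _ = (c : ℂ) * ((‖sv v‖ : ℝ) : ℂ) ^ 2 := by push_cast; ring

lemma posSemidef_sub_smul_one (A : Matrix (Fin n) (Fin n) ℂ) {c : ℝ}
    (h : ∀ v : Fin n → ℂ, c * ‖sv v‖ ^ 2 ≤ ‖sv (A *ᵥ v)‖ ^ 2) :
    (Aᴴ * A - ((c : ℂ) • (1 : Matrix (Fin n) (Fin n) ℂ))).PosSemidef := by
  refine Matrix.PosSemidef.of_dotProduct_mulVec_nonneg ?_ ?_
  · refine Matrix.IsHermitian.sub (Matrix.isHermitian_conjTranspose_mul_self A) ?_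
    simp [Matrix.IsHermitian, Matrix.conjTranspose_smul, Complex.star_def, Complex.conj_ofReal]
  · intro v
    rw [sub_mulVec, dotProduct_sub, smul_mulVec, one_mulVec, dotProduct_smul, dot_self_eq,
      dot_ctm, smul_eq_mul, sub_nonneg]
    calc (c : ℂ) * ((‖sv v‖ : ℝ) : ℂ) ^ 2 = ((c * ‖sv v‖ ^ 2 : ℝ) : ℂ) := by push_cast; ring
    _ ≤ ((‖sv (A *ᵥ v)‖ ^ 2 : ℝ) : ℂ) := by rw [Complex.real_le_real]; exact h v
    _ = ((‖sv (A *ᵥ v)‖ : ℝ) : ℂ) ^ 2 := by push_cast; ring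

lemma matOpNorm_le_sqrt {A : Matrix (Fin n) (Fin n) ℂ} {c : ℝ} (hc : 0 ≤ c)
    (h : (((c : ℂ) • (1 : Matrix (Fin n) (Fin n) ℂ)) - Aᴴ * A).PosSemidef) :
    matOpNorm A ≤ Real.sqrt c := by
  refine matOpNorm_le_of (Real.sqrt_nonneg c) fun v => ?_
  have h2 := h.dotProduct_mulVec_nonneg v
  rw [sub_mulVec, dotProduct_sub, smul_mulVec, one_mulVec, dotProduct_smul, dot_self_eq,
    dot_ctm, smul_eq_mul, sub_nonneg] at h2
  have key : ‖sv (A *ᵥ v)‖ ^ 2 ≤ c * ‖sv v‖ ^ 2 := by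
    have : ((‖sv (A *ᵥ v)‖ ^ 2 : ℝ) : ℂ) ≤ ((c * ‖sv v‖ ^ 2 : ℝ) : ℂ) := by
      calc ((‖sv (A *ᵥ v)‖ ^ 2 : ℝ) : ℂ) = ((‖sv (A *ᵥ v)‖ : ℝ) : ℂ) ^ 2 := by push_cast; ring
      _ ≤ (c : ℂ) * ((‖sv v‖ : ℝ) : ℂ) ^ 2 := h2
      _ = ((c * ‖sv v‖ ^ 2 : ℝ) : ℂ) := by push_cast; ring
    exact_mod_cast this
  calc ‖sv (A *ᵥ v)‖ = Real.sqrt (‖sv (A *ᵥ v)‖ ^ 2) := (Real.sqrt_sq (norm_nonneg _)).symm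
  _ ≤ Real.sqrt (c * ‖sv v‖ ^ 2) := Real.sqrt_le_sqrt key
  _ = Real.sqrt c * ‖sv v‖ := by rw [Real.sqrt_mul hc, Real.sqrt_sq (norm_nonneg _)]

lemma posSemidef_smul {A : Matrix (Fin n) (Fin n) ℂ} (hA : A.PosSemidef) {r : ℝ} (hr : 0 ≤ r) :
    ((r : ℂ) • A).PosSemidef := by
  refine Matrix.PosSemidef.of_dotProduct_mulVec_nonneg ?_ fun x => ?_
  · rw [Matrix.IsHermitian, Matrix.conjTranspose_smul]
    simp [Complex.star_def, Complex.conj_ofReal, hA.1.eq]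
  · rw [smul_mulVec, dotProduct_smul, smul_eq_mul]
    exact mul_nonneg (Complex.zero_le_real.mpr hr) (hA.dotProduct_mulVec_nonneg x)

lemma posDef_smul_one {r : ℝ} (hr : 0 < r) :
    ((r : ℂ) • (1 : Matrix (Fin n) (Fin n) ℂ)).PosDef := by
  refine Matrix.PosDef.of_dotProduct_mulVec_pos ?_ fun x hx => ?_
  · rw [Matrix.IsHermitian, Matrix.conjTranspose_smul]
    simp [Complex.star_def, Complex.conj_ofReal]
  · rw [smul_mulVec, one_mulVec, dotProduct_smul, smul_eq_mul]
    refine mul_pos ?_ (Matrix.dotProduct_star_self_pos_iff.mpr hx)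
    exact_mod_cast Complex.zero_lt_real.mpr hr

end StmtAux

open StmtAux

set_option maxHeartbeats 1000000 in
/-- equivalence of the symmetrizer and bounded-diagonalization
characterizations of strong hyperbolicity for a single matrix `P`.
(i) From a bounded diagonalizing transformation `T` one obtains the symmetrizer
`H = (T T*)⁻¹` with `K⁻² I ≤ H ≤ K² I`;
(ii) from a symmetrizer `H` with `M⁻¹ I ≤ H ≤ M I` one obtains a diagonalizing `T` with
`‖T‖, ‖T⁻¹‖ ≤ √M`; one may take `T = H^{-1/2} U` with `U` unitary diagonalizing
`H^{1/2} P H^{-1/2}`. -/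
theorem stmt_18 {n : ℕ} (P : Matrix (Fin n) (Fin n) ℂ) :
    (∀ (K : ℝ), 0 < K → ∀ T : Matrix (Fin n) (Fin n) ℂ, IsUnit T →
      matOpNorm T ≤ K → matOpNorm T⁻¹ ≤ K →
      ∀ Λ : Fin n → ℝ, T⁻¹ * P * T = Matrix.diagonal (fun i => (Λ i : ℂ)) →
      ((T * Tᴴ)⁻¹.IsHermitian ∧
        (T * Tᴴ)⁻¹ * P = Pᴴ * (T * Tᴴ)⁻¹ ∧
        loewnerLE ((((K ^ 2)⁻¹ : ℝ) : ℂ) • (1 : Matrix (Fin n) (Fin n) ℂ)) (T * Tᴴ)⁻¹ ∧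
        loewnerLE (T * Tᴴ)⁻¹ (((K ^ 2 : ℝ) : ℂ) • (1 : Matrix (Fin n) (Fin n) ℂ)))) ∧
    (∀ (M : ℝ), 0 < M → ∀ H : Matrix (Fin n) (Fin n) ℂ, H.IsHermitian →
      H * P = Pᴴ * H →
      loewnerLE (((M⁻¹ : ℝ) : ℂ) • (1 : Matrix (Fin n) (Fin n) ℂ)) H →
      loewnerLE H (((M : ℝ) : ℂ) • (1 : Matrix (Fin n) (Fin n) ℂ)) →
      ∃ T : Matrix (Fin n) (Fin n) ℂ, IsUnit T ∧
        matOpNorm T ≤ Real.sqrt M ∧ matOpNorm T⁻¹ ≤ Real.sqrt M ∧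
        (∃ Λ : Fin n → ℝ, T⁻¹ * P * T = Matrix.diagonal (fun i => (Λ i : ℂ))) ∧
        (∃ (hH : H.PosSemidef) (U : Matrix (Fin n) (Fin n) ℂ),
          U ∈ Matrix.unitaryGroup (Fin n) ℂ ∧
          T = hH.sqrt⁻¹ * U ∧
          (∃ Λ : Fin n → ℝ,
            Uᴴ * (hH.sqrt * P * hH.sqrt⁻¹) * U = Matrix.diagonal (fun i => (Λ i : ℂ))))) := by
  constructor
  · -- Part (i)
    intro K hK T hT hTn hTin Λ hdiag
    have hdet : IsUnit T.det := (Matrix.isUnit_iff_isUnit_det T).mp hT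
    haveI := T.invertibleOfIsUnitDet hdet
    haveI := Tᴴ.invertibleOfIsUnitDet (by rw [Matrix.det_conjTranspose]; exact hdet.star)
    have hGT : (T * Tᴴ)⁻¹ = (T⁻¹)ᴴ * T⁻¹ := by
      rw [Matrix.mul_inv_rev, Matrix.conjTranspose_nonsing_inv]
    have herm : (T * Tᴴ)⁻¹.IsHermitian := by
      rw [hGT]; exact Matrix.isHermitian_conjTranspose_mul_self _
    have hD : (Matrix.diagonal fun i => (Λ i : ℂ))ᴴ = Matrix.diagonal fun i => (Λ i : ℂ) := by
      rw [Matrix.diagonal_conjTranspose]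
      simp [Pi.star_def, Complex.star_def, Complex.conj_ofReal]
    have hP : P = T * Matrix.diagonal (fun i => (Λ i : ℂ)) * T⁻¹ := by
      rw [← hdiag]
      simp only [Matrix.mul_assoc, Matrix.mul_inv_cancel_left_of_invertible,
        Matrix.inv_mul_cancel_left_of_invertible, Matrix.mul_inv_of_invertible, Matrix.mul_one]
    refine ⟨herm, ?_, ?_, ?_⟩
    · rw [hGT, hP]
      simp only [Matrix.conjTranspose_mul, Matrix.conjTranspose_nonsing_inv, hD,
        Matrix.conjTranspose_conjTranspose]
      simp only [Matrix.mul_assoc, Matrix.mul_inv_cancel_left_of_invertible,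
        Matrix.inv_mul_cancel_left_of_invertible, Matrix.mul_inv_of_invertible,
        Matrix.inv_mul_of_invertible, Matrix.mul_one, Matrix.one_mul]
    · show ((T * Tᴴ)⁻¹ - _).PosSemidef
      rw [hGT]
      refine posSemidef_sub_smul_one T⁻¹ fun v => ?_
      have h1 : ‖sv v‖ ≤ K * ‖sv (T⁻¹ *ᵥ v)‖ := by
        have := norm_mulVec_le hTn (T⁻¹ *ᵥ v)
        rwa [mulVec_mulVec, Matrix.mul_inv_of_invertible, one_mulVec] at this
      have hK2 : (0 : ℝ) < K ^ 2 := by positivity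
      rw [inv_mul_le_iff₀ hK2]
      nlinarith [norm_nonneg (sv v), norm_nonneg (sv (T⁻¹ *ᵥ v))]
    · show (_ - (T * Tᴴ)⁻¹).PosSemidef
      rw [hGT]
      refine posSemidef_smul_one_sub T⁻¹ fun v => ?_
      have h1 := norm_mulVec_le hTin v
      nlinarith [norm_nonneg (sv v), norm_nonneg (sv (T⁻¹ *ᵥ v)), hK.le]
  · -- Part (ii)
    intro M hM H hHh hHP hle1 hle2
    have hle1' : (H - ((M⁻¹ : ℝ) : ℂ) • 1).PosSemidef := hle1
    have hle2' : (((M : ℝ) : ℂ) • 1 - H).PosSemidef := hle2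
    have hHpd : H.PosDef := by
      have := Matrix.PosDef.posSemidef_add hle1' (posDef_smul_one (r := M⁻¹) (by positivity))
      simpa using this
    have hH : H.PosSemidef := hHpd.posSemidef
    obtain ⟨S, hSdef⟩ : ∃ S : Matrix (Fin n) (Fin n) ℂ, hH.sqrt = S := ⟨_, rfl⟩
    have hSpsd : S.PosSemidef := hSdef ▸ hH.posSemidef_sqrt
    have hSh : S.IsHermitian := hSpsd.1
    have hSS : S * S = H := by rw [← hSdef]; exact hH.sqrt_mul_self
    have hdetS : IsUnit S.det := by
      refine isUnit_of_mul_isUnit_left (y := S.det) ?_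
      rw [← Matrix.det_mul, hSS]
      exact (Matrix.isUnit_iff_isUnit_det H).mp hHpd.isUnit
    haveI := S.invertibleOfIsUnitDet hdetS
    have hSinvh : S⁻¹.IsHermitian := by
      rw [Matrix.IsHermitian, Matrix.conjTranspose_nonsing_inv, hSh.eq]
    have hHSi : H * S⁻¹ = S := by rw [← hSS, Matrix.mul_inv_cancel_right_of_invertible]
    have hAh : (S * P * S⁻¹).IsHermitian := by
      have key : Pᴴ * S = S * S * (P * S⁻¹) := by
        calc Pᴴ * S = Pᴴ * H * S⁻¹ := by rw [Matrix.mul_assoc, hHSi]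
        _ = H * P * S⁻¹ := by rw [← hHP]
        _ = S * S * (P * S⁻¹) := by rw [← hSS, Matrix.mul_assoc (S * S) P S⁻¹]
      rw [Matrix.IsHermitian, Matrix.conjTranspose_mul, Matrix.conjTranspose_mul,
        hSinvh.eq, hSh.eq, key]
      simp [Matrix.mul_assoc]
    obtain ⟨Uc, hUdef⟩ : ∃ Uc : Matrix (Fin n) (Fin n) ℂ,
        (hAh.eigenvectorUnitary : Matrix (Fin n) (Fin n) ℂ) = Uc := ⟨_, rfl⟩
    have hUmem : Uc ∈ Matrix.unitaryGroup (Fin n) ℂ := hUdef ▸ hAh.eigenvectorUnitary.2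
    have hU1 : Ucᴴ * Uc = 1 := by
      rw [← Matrix.star_eq_conjTranspose]
      exact (Unitary.mem_iff.mp hUmem).1
    have hU2 : Uc * Ucᴴ = 1 := by
      rw [← Matrix.star_eq_conjTranspose]
      exact (Unitary.mem_iff.mp hUmem).2
    have hUunit : IsUnit Uc := ⟨⟨Uc, Ucᴴ, hU2, hU1⟩, rfl⟩
    have hTunit : IsUnit (S⁻¹ * Uc) :=
      ((Matrix.isUnit_nonsing_inv_iff).mpr ((Matrix.isUnit_iff_isUnit_det S).mpr hdetS)).mul hUunit
    have hTinv : (S⁻¹ * Uc)⁻¹ = Ucᴴ * S := by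
      refine Matrix.inv_eq_left_inv ?_
      calc Ucᴴ * S * (S⁻¹ * Uc) = Ucᴴ * (S * (S⁻¹ * Uc)) := by rw [Matrix.mul_assoc]
      _ = Ucᴴ * Uc := by rw [Matrix.mul_inv_cancel_left_of_invertible]
      _ = 1 := hU1
    have hdiagA : Ucᴴ * (S * P * S⁻¹) * Uc
        = Matrix.diagonal (fun i => ((hAh.eigenvalues i : ℝ) : ℂ)) := by
      have := hAh.conjStarAlgAut_star_eigenvectorUnitary
      rw [Unitary.conjStarAlgAut_star_apply, Matrix.star_eq_conjTranspose, hUdef] at this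
      exact this
    have hHinv : H⁻¹ = S⁻¹ * S⁻¹ := by
      rw [← hSS, Matrix.mul_inv_rev]
    have hMM : (M : ℂ) * ((M⁻¹ : ℝ) : ℂ) = 1 := by
      push_cast
      field_simp
    have hA1 : (((M : ℝ) : ℂ) • 1 - H⁻¹).PosSemidef := by
      have c1 := hle1'.conjTranspose_mul_mul_same S⁻¹
      rw [hSinvh.eq] at c1
      have e1 : S⁻¹ * (H - ((M⁻¹ : ℝ) : ℂ) • 1) * S⁻¹
          = 1 - ((M⁻¹ : ℝ) : ℂ) • (S⁻¹ * S⁻¹) := by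
        rw [Matrix.mul_sub, Matrix.sub_mul]
        congr 1
        · rw [← hSS]
          simp [Matrix.mul_assoc]
        · simp [Matrix.smul_mul, Matrix.mul_smul]
      rw [e1] at c1
      have c2 := posSemidef_smul c1 hM.le
      have e2 : (M : ℂ) • (1 - ((M⁻¹ : ℝ) : ℂ) • (S⁻¹ * S⁻¹))
          = ((M : ℝ) : ℂ) • 1 - H⁻¹ := by
        rw [smul_sub, smul_smul, hMM, one_smul, hHinv]
      rwa [e2] at c2
    have hTform : S⁻¹ * Uc = hH.sqrt⁻¹ * Uc := by rw [hSdef]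
    refine ⟨S⁻¹ * Uc, hTunit, ?_, ?_, ?_, hH, Uc, hUmem, hTform, hAh.eigenvalues, ?_⟩
    rotate_left 3
    · rw [hSdef]
      exact hdiagA
    · refine matOpNorm_le_sqrt hM.le ?_
      have e3 : (S⁻¹ * Uc)ᴴ * (S⁻¹ * Uc) = Ucᴴ * H⁻¹ * Uc := by
        rw [Matrix.conjTranspose_mul, hSinvh.eq, hHinv]
        simp [Matrix.mul_assoc]
      have c3 := hA1.conjTranspose_mul_mul_same Uc
      have e4 : Ucᴴ * (((M : ℝ) : ℂ) • 1 - H⁻¹) * Uc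
          = ((M : ℝ) : ℂ) • 1 - Ucᴴ * H⁻¹ * Uc := by
        rw [Matrix.mul_sub, Matrix.sub_mul]
        congr 1
        rw [Matrix.mul_smul, Matrix.smul_mul, mul_one, hU1]
      rw [e4] at c3
      rwa [e3]
    · rw [hTinv]
      refine matOpNorm_le_sqrt hM.le ?_
      have e5 : (Ucᴴ * S)ᴴ * (Ucᴴ * S) = H := by
        rw [Matrix.conjTranspose_mul, Matrix.conjTranspose_conjTranspose, hSh.eq]
        calc S * Uc * (Ucᴴ * S) = S * (Uc * Ucᴴ) * S := by
              rw [Matrix.mul_assoc, Matrix.mul_assoc, Matrix.mul_assoc]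
        _ = S * S := by rw [hU2, Matrix.mul_one]
        _ = H := hSS
      rw [e5]
      exact hle2'
    · refine ⟨hAh.eigenvalues, ?_⟩
      rw [hTinv, ← hdiagA]
      simp only [Matrix.mul_assoc]
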